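/- Let A be an N×k array with entries in {1,...,s} where s ≥ 2, k ≥ 2 and N = λs² for a positive integer λ, and let a > b > 0 be real numbers. Set γ := (λs − 1)k / (λs² − 1) and define DD²(A;a,b) := −((a−b)/s + b)^k + (b^k/N²)·Σ_{1 ≤ r, r̃ ≤ N} (a/b)^{H(A;r,r̃)}. Then DD²(A;a,b) ≥ −((a−b)/s + b)^k + a^k/(λs²) + b^k·(1 − 1/(λs²))·(1 + (a/b − 1)·(γ − ⌊γ⌋))·(a/b)^{⌊γ⌋}. -/

import Mathlib

open Finset

noncomputable section

instance {t k : ℕ} : DecidablePred (StrictMono : (Fin t → Fin k) → Prop) := fun f =>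
  decidable_of_iff (∀ a b : Fin t, a < b → f a < f b) Iff.rfl

/-- The number of rows of the array `A` whose restriction to the columns
`j 0, …, j (t-1)` equals the tuple `x`. -/
def rowCount {S : Type*} [DecidableEq S] {N k t : ℕ} (A : Fin N → Fin k → S)
    (x : Fin t → S) (j : Fin t → Fin k) : ℕ :=
  (Finset.univ.filter fun i : Fin N => ∀ r, A i (j r) = x r).card

/-- `A` is an orthogonal array with `s` levels and strength `t`. -/
def IsOA {S : Type*} [DecidableEq S] (s t : ℕ) {N k : ℕ} (A : Fin N → Fin k → S) : Prop :=
  ∀ (x : Fin t → S) (j : Fin t → Fin k), StrictMono j →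
    (rowCount A x j : ℝ) = (N : ℝ) / (s : ℝ) ^ t

/-- The `p`-unbalance of strength `t` of `A` (with `s` levels). -/
def Unb {S : Type*} [Fintype S] [DecidableEq S] (s : ℕ) (p : ℝ) (t : ℕ) {N k : ℕ}
    (A : Fin N → Fin k → S) : ℝ :=
  ∑ x : Fin t → S, ∑ j ∈ Finset.univ.filter (fun j : Fin t → Fin k => StrictMono j),
    |(rowCount A x j : ℝ) - (N : ℝ) / (s : ℝ) ^ t| ^ p

/-- The tolerance of strength `t` of `A` (with `s` levels). -/
def Tol {S : Type*} [DecidableEq S] (s t : ℕ) {N k : ℕ} (A : Fin N → Fin k → S) : ℝ :=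
  ⨆ (x : Fin t → S) (j : {j : Fin t → Fin k // StrictMono j}),
    |(rowCount A x j.1 : ℝ) - (N : ℝ) / (s : ℝ) ^ t|

/-- The Hamming similarity between the rows `r` and `r'` of `A`. -/
def Ham {S : Type*} [DecidableEq S] {N k : ℕ} (A : Fin N → Fin k → S) (r r' : Fin N) : ℕ :=
  (Finset.univ.filter fun j : Fin k => A r j = A r' j).card

/-- The matrix `X(A,f)`. -/
def Xmat {S : Type*} {N k : ℕ} (f : S → ℝ) (A : Fin N → Fin k → S) :
    Matrix (Fin N) (Fin k) ℝ :=
  Matrix.of fun i j => f (A i j) / Real.sqrt (∑ i' : Fin N, f (A i' j) ^ 2)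

/-- The absolute deviation of `f` with respect to the uniform measure. -/
def sigma1 {S : Type*} [Fintype S] (s : ℕ) (f : S → ℝ) : ℝ :=
  ⨅ α : ℝ, (∑ x : S, |f x - α|) / s

/-- The typical deviation of `f` with respect to the uniform measure. -/
def sigma2 {S : Type*} [Fintype S] (s : ℕ) (f : S → ℝ) : ℝ :=
  ⨅ α : ℝ, Real.sqrt ((∑ x : S, |f x - α| ^ 2) / s)
end

lemma bern_chord {q : ℝ} (hq : 0 < q) (m n : ℕ) :
    q ^ m * (1 + (q - 1) * ((n : ℝ) - (m : ℝ))) ≤ q ^ n := by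
  rcases le_or_gt m n with h | h
  · obtain ⟨d, rfl⟩ := Nat.exists_eq_add_of_le h
    have h1 : (1 : ℝ) + (d : ℝ) * (q - 1) ≤ (1 + (q - 1)) ^ d :=
      one_add_mul_le_pow (by linarith) d
    have h2 : (1 : ℝ) + (q - 1) = q := by ring
    rw [h2] at h1
    have h3 : ((m + d : ℕ) : ℝ) - (m : ℝ) = (d : ℝ) := by push_cast; ring
    rw [h3, pow_add]
    have := pow_pos hq m
    nlinarith
  · obtain ⟨d, rfl⟩ := Nat.exists_eq_add_of_le h.le
    have h3 : ((n : ℝ)) - ((n + d : ℕ) : ℝ) = -(d : ℝ) := by push_cast; ring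
    rw [h3, pow_add]
    have hqn := pow_pos hq n
    have hqd := pow_pos hq d
    have key : q ^ d * (1 + (q - 1) * (-(d : ℝ))) ≤ 1 := by
      rcases le_or_gt (1 + (q - 1) * (-(d : ℝ))) 0 with h4 | h4
      · nlinarith
      · have hinv : (0:ℝ) < q⁻¹ := by positivity
        have hb : (1 : ℝ) + (d : ℝ) * (q⁻¹ - 1) ≤ (1 + (q⁻¹ - 1)) ^ d :=
          one_add_mul_le_pow (by linarith) d
        have h5 : (1 : ℝ) + (q⁻¹ - 1) = q⁻¹ := by ring
        rw [h5] at hb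
        have hmul : q⁻¹ * q = 1 := inv_mul_cancel₀ hq.ne'
        have h6 : 1 + (q - 1) * (-(d : ℝ)) ≤ 1 + (d : ℝ) * (q⁻¹ - 1) := by
          have : q⁻¹ - 1 + (q - 1) ≥ 0 := by nlinarith [sq_nonneg (q - 1)]
          nlinarith [Nat.cast_nonneg (α := ℝ) d]
        calc q ^ d * (1 + (q - 1) * (-(d : ℝ))) ≤ q ^ d * (q⁻¹ ^ d) := by
              apply mul_le_mul_of_nonneg_left _ hqd.le
              exact h6.trans hb
          _ = 1 := by rw [← mul_pow, mul_comm, hmul, one_pow]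
    nlinarith

lemma sumHam_ge {s N k : ℕ} (hs : 0 < s) (A : Fin N → Fin k → Fin s) :
    (k : ℝ) * (N : ℝ) ^ 2 / (s : ℝ) ≤ ∑ r : Fin N, ∑ r' : Fin N, (Ham A r r' : ℝ) := by
  have hHam : ∀ r r' : Fin N, (Ham A r r' : ℝ) =
      ∑ j : Fin k, if A r j = A r' j then (1 : ℝ) else 0 := by
    intro r r'; rw [Ham, ← Finset.sum_boole]
  simp_rw [hHam]
  have hswap : ∑ r : Fin N, ∑ r' : Fin N, ∑ j : Fin k, (if A r j = A r' j then (1:ℝ) else 0)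
      = ∑ j : Fin k, ∑ r : Fin N, ∑ r' : Fin N, (if A r j = A r' j then (1:ℝ) else 0) := by
    calc ∑ r : Fin N, ∑ r' : Fin N, ∑ j : Fin k, (if A r j = A r' j then (1:ℝ) else 0)
        = ∑ r : Fin N, ∑ j : Fin k, ∑ r' : Fin N, (if A r j = A r' j then (1:ℝ) else 0) :=
          Finset.sum_congr rfl fun r _ => Finset.sum_comm
      _ = _ := Finset.sum_comm
  rw [hswap]
  have hcol : ∀ j : Fin k, (N : ℝ) ^ 2 / (s : ℝ) ≤
      ∑ r : Fin N, ∑ r' : Fin N, (if A r j = A r' j then (1:ℝ) else 0) := by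
    intro j
    set c : Fin s → ℕ := fun v => (univ.filter fun r : Fin N => A r j = v).card with hc
    have h1 : ∀ r : Fin N, ∑ r' : Fin N, (if A r j = A r' j then (1:ℝ) else 0)
        = (c (A r j) : ℝ) := by
      intro r
      rw [Finset.sum_boole]
      congr 2
      ext r'
      simp [eq_comm]
    simp_rw [h1]
    have h2 : ∑ r : Fin N, (c (A r j) : ℝ) = ∑ v : Fin s, (c v : ℝ) ^ 2 := by
      rw [← Finset.sum_fiberwise_of_maps_to' (fun r _ => mem_univ (A r j)) (fun v => (c v : ℝ))]
      refine Finset.sum_congr rfl fun v _ => ?_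
      rw [Finset.sum_const, nsmul_eq_mul, sq]
    rw [h2]
    have h3 : ∑ v : Fin s, (c v : ℝ) = (N : ℝ) := by
      rw [← Nat.cast_sum]
      norm_cast
      rw [← Finset.card_fin N]
      exact (Finset.card_eq_sum_card_fiberwise fun r _ => mem_univ (A r j)).symm
    have h4 : (∑ v : Fin s, (c v : ℝ)) ^ 2 ≤ (s : ℝ) * ∑ v : Fin s, (c v : ℝ) ^ 2 := by
      have := sq_sum_le_card_mul_sum_sq (s := (univ : Finset (Fin s))) (f := fun v => (c v : ℝ))
      simpa using this
    rw [h3] at h4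
    rw [div_le_iff₀ (by positivity)]
    linarith
  calc (k : ℝ) * (N : ℝ) ^ 2 / (s : ℝ) = ∑ _j : Fin k, (N : ℝ) ^ 2 / (s : ℝ) := by
        rw [Finset.sum_const]; simp; ring
    _ ≤ _ := Finset.sum_le_sum fun j _ => hcol j

/-- Lower bound for the squared discrete discrepancy
`DD(A;a,b)² = −((a−b)/s + b)^k + (b^k/N²)·Σ_{r,r̃}(a/b)^{H(A;r,r̃)}` of an array with
`N = λs²` rows, in terms of `γ = (λs−1)k/(λs²−1)`. -/
theorem statement14 {s N k l : ℕ} (hs : 2 ≤ s) (hk : 2 ≤ k) (hl : 0 < l)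
    (hN : N = l * s ^ 2) {a b : ℝ} (hb : 0 < b) (hab : b < a)
    (A : Fin N → Fin k → Fin s) (γ : ℝ)
    (hγ : γ = ((l : ℝ) * s - 1) * k / ((l : ℝ) * s ^ 2 - 1)) :
    -(((a - b) / (s : ℝ) + b) ^ k) + a ^ k / ((l : ℝ) * (s : ℝ) ^ 2) +
        b ^ k * (1 - 1 / ((l : ℝ) * (s : ℝ) ^ 2)) *
          (1 + (a / b - 1) * (γ - (⌊γ⌋₊ : ℝ))) * (a / b) ^ (⌊γ⌋₊ : ℕ)
      ≤ -(((a - b) / (s : ℝ) + b) ^ k) +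
          ((b ^ k) / (N : ℝ) ^ 2) * ∑ r : Fin N, ∑ r' : Fin N, (a / b) ^ (Ham A r r') := by
  have hsR : (2:ℝ) ≤ (s:ℝ) := by exact_mod_cast hs
  have hlR : (1:ℝ) ≤ (l:ℝ) := by exact_mod_cast hl
  have hNpos : 0 < N := by
    subst hN; exact Nat.mul_pos hl (Nat.pow_pos (by omega))
  have hNR : (N:ℝ) = (l:ℝ) * (s:ℝ)^2 := by rw [hN]; push_cast; ring
  have hNRpos : (0:ℝ) < (N:ℝ) := by exact_mod_cast hNpos
  have hNR4 : (4:ℝ) ≤ (N:ℝ) := by rw [hNR]; nlinarith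
  set q := a / b with hqdef
  have hq1 : 1 < q := (one_lt_div hb).2 hab
  have hq0 : (0:ℝ) < q := by linarith
  set m := ⌊γ⌋₊ with hm
  have hqm := pow_pos hq0 m
  set T := ∑ r : Fin N, ∑ r' : Fin N, (Ham A r r' : ℝ) with hT
  have hTge : (k:ℝ) * (N:ℝ)^2 / (s:ℝ) ≤ T := sumHam_ge (by omega) A
  have hdiag : ∀ r : Fin N, Ham A r r = k := by
    intro r; rw [Ham, Finset.filter_true_of_mem (fun j _ => rfl)]
    simp
  set O := ∑ r : Fin N, ∑ r' ∈ univ.erase r, q ^ (Ham A r r') with hO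
  have hsplit : ∑ r : Fin N, ∑ r' : Fin N, q ^ (Ham A r r') = (N:ℝ) * q ^ k + O := by
    have h1 : ∀ r : Fin N, ∑ r' : Fin N, q ^ Ham A r r'
        = q ^ k + ∑ r' ∈ univ.erase r, q ^ Ham A r r' := by
      intro r
      rw [← Finset.add_sum_erase univ _ (mem_univ r), hdiag r]
    simp_rw [h1]
    rw [Finset.sum_add_distrib, Finset.sum_const, Finset.card_univ, Fintype.card_fin,
      nsmul_eq_mul, hO]
  have hcard : ∀ r : Fin N, (((univ : Finset (Fin N)).erase r).card : ℝ) = (N:ℝ) - 1 := by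
    intro r
    rw [Finset.card_erase_of_mem (mem_univ r), Finset.card_univ, Fintype.card_fin,
      Nat.cast_sub hNpos, Nat.cast_one]
  -- off-diagonal lower bound
  have hOb : q ^ m * ((N:ℝ)*((N:ℝ)-1)*(1 - (q-1)*(m:ℝ)) + (q-1)*(T - (N:ℝ)*(k:ℝ))) ≤ O := by
    have step1 : ∀ r : Fin N,
        ∑ r' ∈ univ.erase r, (q ^ m * (1 + (q-1)*((Ham A r r' : ℝ) - (m:ℝ))))
          ≤ ∑ r' ∈ univ.erase r, q ^ Ham A r r' :=
      fun r => Finset.sum_le_sum fun r' _ => bern_chord hq0 m _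
    have step2 : ∀ r : Fin N,
        ∑ r' ∈ univ.erase r, (q ^ m * (1 + (q-1)*((Ham A r r' : ℝ) - (m:ℝ))))
          = q^m * (((N:ℝ)-1)*(1-(q-1)*(m:ℝ))
              + (q-1)*((∑ r' : Fin N, (Ham A r r' : ℝ)) - (k:ℝ))) := by
      intro r
      rw [← Finset.mul_sum]
      congr 1
      have h2 : ∀ r' : Fin N, 1 + (q-1)*((Ham A r r' : ℝ) - (m:ℝ))
          = (1 - (q-1)*(m:ℝ)) + (q-1)*(Ham A r r' : ℝ) := fun r' => by ring
      simp_rw [h2]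
      rw [Finset.sum_add_distrib, Finset.sum_const, ← Finset.mul_sum,
        Finset.sum_erase_eq_sub (mem_univ r), nsmul_eq_mul, hcard r, hdiag r]
    have step3 : ∑ r : Fin N, (q^m * (((N:ℝ)-1)*(1-(q-1)*(m:ℝ))
        + (q-1)*((∑ r' : Fin N, (Ham A r r' : ℝ)) - (k:ℝ)))) ≤ O := by
      rw [hO]
      exact Finset.sum_le_sum fun r _ => (step2 r) ▸ step1 r
    have step4 : ∑ r : Fin N, (q^m * (((N:ℝ)-1)*(1-(q-1)*(m:ℝ))
        + (q-1)*((∑ r' : Fin N, (Ham A r r' : ℝ)) - (k:ℝ))))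
        = q ^ m * ((N:ℝ)*((N:ℝ)-1)*(1 - (q-1)*(m:ℝ)) + (q-1)*(T - (N:ℝ)*(k:ℝ))) := by
      rw [← Finset.mul_sum]
      congr 1
      rw [Finset.sum_add_distrib, Finset.sum_const, Finset.card_univ, Fintype.card_fin,
        nsmul_eq_mul, ← Finset.mul_sum, Finset.sum_sub_distrib, Finset.sum_const,
        Finset.card_univ, Fintype.card_fin, nsmul_eq_mul, hT]
      ring
    linarith [step3, step4.symm.le, step4.le]
  have hden : (0:ℝ) < (l:ℝ) * (s:ℝ)^2 - 1 := by nlinarith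
  have hE : γ * (N:ℝ) * ((N:ℝ)-1) ≤ T - (N:ℝ)*(k:ℝ) := by
    have h1 : γ * ((N:ℝ)-1) = ((l:ℝ)*(s:ℝ) - 1)*(k:ℝ) := by
      rw [hγ, hNR]
      field_simp
    have hNs : (N:ℝ) / (s:ℝ) = (l:ℝ)*(s:ℝ) := by
      rw [hNR]; field_simp
    have h2 : (k:ℝ) * (N:ℝ)^2 / (s:ℝ) = (k:ℝ) * (N:ℝ) * ((N:ℝ)/(s:ℝ)) := by ring
    rw [hNs] at h2
    nlinarith [hTge, Nat.cast_nonneg (α := ℝ) k]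
  have hOfinal : (N:ℝ)*((N:ℝ)-1)*(q^m)*(1+(q-1)*(γ-(m:ℝ))) ≤ O := by
    have h1 : q^m*(q-1)*(γ*(N:ℝ)*((N:ℝ)-1)) ≤ q^m*(q-1)*(T - (N:ℝ)*(k:ℝ)) :=
      mul_le_mul_of_nonneg_left hE (mul_nonneg hqm.le (by linarith))
    have e1 : (N:ℝ)*((N:ℝ)-1)*(q^m)*(1+(q-1)*(γ-(m:ℝ)))
        = q^m*((N:ℝ)*((N:ℝ)-1)*(1-(q-1)*(m:ℝ))) + q^m*(q-1)*(γ*(N:ℝ)*((N:ℝ)-1)) := by ring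
    have e2 : q^m*((N:ℝ)*((N:ℝ)-1)*(1-(q-1)*(m:ℝ)) + (q-1)*(T-(N:ℝ)*(k:ℝ)))
        = q^m*((N:ℝ)*((N:ℝ)-1)*(1-(q-1)*(m:ℝ))) + q^m*(q-1)*(T-(N:ℝ)*(k:ℝ)) := by ring
    linarith [hOb]
  have hS : (N:ℝ)*q^k + (N:ℝ)*((N:ℝ)-1)*(q^m)*(1+(q-1)*(γ-(m:ℝ)))
      ≤ ∑ r : Fin N, ∑ r' : Fin N, q ^ (Ham A r r') := by
    rw [hsplit]; linarith
  have hcoef : (0:ℝ) < b^k / (N:ℝ)^2 := by positivity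
  have hmul := mul_le_mul_of_nonneg_left hS hcoef.le
  have hbk : b^k * q^k = a^k := by
    rw [hqdef, div_pow, mul_div_cancel₀]
    positivity
  have heq : b^k/(N:ℝ)^2 * ((N:ℝ)*q^k + (N:ℝ)*((N:ℝ)-1)*(q^m)*(1+(q-1)*(γ-(m:ℝ))))
      = b^k*q^k/(N:ℝ) + b^k*(1-1/(N:ℝ))*(1+(q-1)*(γ-(m:ℝ)))*q^m := by
    field_simp
  rw [← hNR, ← hbk]
  linarith [hmul, heq.le, heq.ge]
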